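/- Let D : H → ℓ²(ℕ) be an isometry with ‖DD*‖_{ℓ¹→ℓ¹} < ∞ (equivalently sup_j Σ_k |⟨D*e_j, D*e_k⟩| < ∞). Then the operator DD* maps c₀(ℕ) into c₀(ℕ): for every z ∈ c₀(ℕ), the sequence DD*z tends to zero. -/

import Mathlib

noncomputable abbrev ℓ2 := lp (fun _ : ℕ => ℂ) 2

set_option maxHeartbeats 1000000 in
/-- If `D : H → ℓ²` is an isometry with `sup_j Σ_k |⟨D*e_j, D*e_k⟩| ≤ B < ∞`,
then `DD*` maps `c₀(ℕ)` to `c₀(ℕ)`: for every sequence `z` converging to `0`,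
the sequence `k ↦ (DD*z)_k = Σ_j ⟨D*e_k, D*e_j⟩ z_j` converges to `0`. -/
theorem stmt_10 {H : Type*} [NormedAddCommGroup H] [InnerProductSpace ℂ H] [CompleteSpace H]
    (D : H →L[ℂ] ℓ2) (hD : ∀ f : H, ‖D f‖ = ‖f‖) (B : ℝ)
    (hrow : ∀ j : ℕ, Summable fun k : ℕ =>
      ‖(inner ℂ (ContinuousLinearMap.adjoint D (lp.single 2 j (1 : ℂ)))
        (ContinuousLinearMap.adjoint D (lp.single 2 k (1 : ℂ))) : ℂ)‖)
    (hB : ∀ j : ℕ, (∑' k : ℕ,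
      ‖(inner ℂ (ContinuousLinearMap.adjoint D (lp.single 2 j (1 : ℂ)))
        (ContinuousLinearMap.adjoint D (lp.single 2 k (1 : ℂ))) : ℂ)‖) ≤ B)
    (z : ℕ → ℂ) (hz : Filter.Tendsto z Filter.atTop (nhds 0)) :
    Filter.Tendsto
      (fun k : ℕ => ∑' j : ℕ,
        (inner ℂ (ContinuousLinearMap.adjoint D (lp.single 2 k (1 : ℂ)))
          (ContinuousLinearMap.adjoint D (lp.single 2 j (1 : ℂ))) : ℂ) * z j)
      Filter.atTop (nhds 0) := by
  set a : ℕ → ℕ → ℂ := fun k j =>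
    (inner ℂ (ContinuousLinearMap.adjoint D (lp.single 2 k (1 : ℂ)))
      (ContinuousLinearMap.adjoint D (lp.single 2 j (1 : ℂ))) : ℂ) with ha
  -- column decay: for fixed j, a k j → 0 as k → ∞
  have hcol : ∀ j : ℕ, Filter.Tendsto (fun k => a k j) Filter.atTop (nhds 0) := by
    intro j
    set f : ℓ2 := D (ContinuousLinearMap.adjoint D (lp.single 2 j (1 : ℂ))) with hf
    have hak : ∀ k : ℕ, a k j = f k := by
      intro k
      show (inner ℂ (ContinuousLinearMap.adjoint D (lp.single 2 k (1 : ℂ)))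
        (ContinuousLinearMap.adjoint D (lp.single 2 j (1 : ℂ))) : ℂ) = f k
      rw [ContinuousLinearMap.adjoint_inner_left, lp.inner_single_left]
      simp [hf]
    have hsum : Summable fun k => ‖f k‖ ^ 2 := by
      have := (lp.memℓp f).summable (p := 2) (by norm_num)
      simpa using this
    have h2 : Filter.Tendsto (fun k => ‖f k‖ ^ 2) Filter.atTop (nhds 0) :=
      hsum.tendsto_atTop_zero
    have h3 : Filter.Tendsto (fun k => ‖f k‖) Filter.atTop (nhds 0) := by
      have := (Real.continuous_sqrt.tendsto 0).comp h2
      simp only [Real.sqrt_zero] at this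
      convert this using 2 with k
      rw [Function.comp_apply, Real.sqrt_sq (norm_nonneg _)]
    have h4 : Filter.Tendsto (fun k => (f k : ℂ)) Filter.atTop (nhds 0) :=
      tendsto_zero_iff_norm_tendsto_zero.2 h3
    simp only [hak]
    exact h4
  -- rows of a are ℓ¹
  have hrowa : ∀ k : ℕ, Summable fun j => ‖a k j‖ := fun k => hrow k
  have hBa : ∀ k : ℕ, (∑' j : ℕ, ‖a k j‖) ≤ B := fun k => hB k
  have hBnn : (0 : ℝ) ≤ B :=
    le_trans (tsum_nonneg fun _ => norm_nonneg _) (hBa 0)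
  -- z is bounded
  obtain ⟨C, hC⟩ : ∃ C : ℝ, ∀ j, ‖z j‖ ≤ C := by
    obtain ⟨C, hC⟩ := hz.norm.bddAbove_range
    exact ⟨C, fun j => hC ⟨j, rfl⟩⟩
  -- summability of the series defining DD*z
  have hsummable : ∀ k : ℕ, Summable fun j => a k j * z j := by
    intro k
    refine Summable.of_norm_bounded ((hrowa k).mul_right C) ?_
    intro j
    rw [norm_mul]
    have : ‖a k j‖ = ‖a k j‖ := rfl
    rw [this]
    exact mul_le_mul_of_nonneg_left (hC j) (norm_nonneg _)
  rw [NormedAddCommGroup.tendsto_nhds_zero]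
  intro ε hε
  have hδpos : 0 < ε / (2 * (B + 1)) := by positivity
  obtain ⟨N, hN⟩ : ∃ N : ℕ, ∀ j ≥ N, ‖z j‖ < ε / (2 * (B + 1)) := by
    have := (Metric.tendsto_atTop.1 hz) (ε / (2 * (B + 1))) hδpos
    obtain ⟨N, hN⟩ := this
    exact ⟨N, fun j hj => by simpa [dist_eq_norm] using hN j hj⟩
  -- head tends to zero
  have hhead : Filter.Tendsto (fun k => ∑ i ∈ Finset.range N, a k i * z i)
      Filter.atTop (nhds 0) := by
    have : Filter.Tendsto (fun k => ∑ i ∈ Finset.range N, a k i * z i)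
        Filter.atTop (nhds (∑ i ∈ Finset.range N, (0 : ℂ) * z i)) :=
      tendsto_finset_sum _ fun i _ => (hcol i).mul_const (z i)
    simpa using this
  have hheadev : ∀ᶠ k in Filter.atTop,
      ‖∑ i ∈ Finset.range N, a k i * z i‖ < ε / 2 := by
    have := (NormedAddCommGroup.tendsto_nhds_zero.1 hhead) (ε / 2) (by positivity)
    exact this
  filter_upwards [hheadev] with k hk
  -- split the sum
  have hsplit : (∑' j : ℕ, a k j * z j) =
      (∑ i ∈ Finset.range N, a k i * z i) + ∑' i : ℕ, a k (i + N) * z (i + N) :=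
    (Summable.sum_add_tsum_nat_add N (hsummable k)).symm
  -- tail bound
  have htail_sum : Summable fun i => ‖a k (i + N)‖ :=
    ((summable_nat_add_iff N).2 (hrowa k))
  have htail1 : ‖∑' i : ℕ, a k (i + N) * z (i + N)‖ ≤
      ∑' i : ℕ, ‖a k (i + N)‖ * (ε / (2 * (B + 1))) := by
    refine (norm_tsum_le_tsum_norm ?_).trans ?_
    · exact ((summable_nat_add_iff N).2 (hsummable k)).norm
    · refine Summable.tsum_le_tsum ?_ ((summable_nat_add_iff N).2 (hsummable k)).norm
        (htail_sum.mul_right _)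
      intro i
      rw [norm_mul]
      exact mul_le_mul_of_nonneg_left (le_of_lt (hN _ (Nat.le_add_left N i)))
        (norm_nonneg _)
  have htail2 : (∑' i : ℕ, ‖a k (i + N)‖ * (ε / (2 * (B + 1)))) ≤
      B * (ε / (2 * (B + 1))) := by
    rw [tsum_mul_right]
    refine mul_le_mul_of_nonneg_right ?_ (le_of_lt hδpos)
    have hle : (∑' i : ℕ, ‖a k (i + N)‖) ≤ ∑' j : ℕ, ‖a k j‖ := by
      have hs := Summable.sum_add_tsum_nat_add N (hrowa k)
      have hnn : 0 ≤ ∑ i ∈ Finset.range N, ‖a k i‖ :=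
        Finset.sum_nonneg fun _ _ => norm_nonneg _
      linarith [hs]
    exact hle.trans (hBa k)
  have htail3 : B * (ε / (2 * (B + 1))) ≤ ε / 2 := by
    have hX : (0:ℝ) < 2 * (B + 1) := by positivity
    rw [mul_div_assoc', div_le_div_iff₀ hX (by norm_num)]
    nlinarith
  calc ‖∑' j : ℕ, a k j * z j‖
      ≤ ‖∑ i ∈ Finset.range N, a k i * z i‖ + ‖∑' i : ℕ, a k (i + N) * z (i + N)‖ := by
        rw [hsplit]; exact norm_add_le _ _
    _ < ε / 2 + ε / 2 := by
        have := htail1.trans (htail2.trans htail3)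
        linarith
    _ = ε := by ring
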